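/- Let ψ be a nontrivial additive character of F_q and let r ≥ 1 be an integer. Let Ω_r be the set of all r×r nonsingular symmetric matrices over F_q. Then b_r(ψ) := Σ_{B ∈ Ω_r} Σ_{h ∈ F_q^{r×2}} ψ(Tr(δ_ε · ᵗh · B · h)) equals q^{r(r+6)/4} · Π_{j=1}^{r/2} (q^{2j−1} − 1) if r is even, and equals −q^{(r²+4r−1)/4} · Π_{j=1}^{(r+1)/2} (q^{2j−1} − 1) if r is odd. -/

import Mathlib

open Matrix
open scoped BigOperators Classical

noncomputable section

abbrev Fq (s : ℕ) : Type := GaloisField 3 s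
noncomputable instance (s : ℕ) : Fintype (Fq s) := Fintype.ofFinite _

def deltaEps (s : ℕ) (ε : Fq s) : Matrix (Fin 2) (Fin 2) (Fq s) := !![1, 0; 0, -ε]

/-- `b_r(ψ)`: the sum over nonsingular symmetric `r × r` matrices `B` and all `r × 2`
matrices `h` of `ψ(Tr(δ_ε ᵗh B h))`. -/
def bSum (s : ℕ) (ε : Fq s) (r : ℕ) (ψ : AddChar (Fq s) ℂ) : ℂ :=
  ∑ B ∈ Finset.univ.filter (fun B : Matrix (Fin r) (Fin r) (Fq s) => IsUnit B.det ∧ B.IsSymm),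
    ∑ h : Matrix (Fin r) (Fin 2) (Fq s), ψ (deltaEps s ε * (hᵀ * B * h)).trace

set_option linter.unusedSectionVars false
set_option maxHeartbeats 2000000

namespace Stmt7Aux

variable {F : Type*} [Field F] [Fintype F] [DecidableEq F]

lemma dot_symm {r : ℕ} {B : Matrix (Fin r) (Fin r) F} (hB : B.IsSymm) (x y : Fin r → F) :
    x ⬝ᵥ B.mulVec y = y ⬝ᵥ B.mulVec x := by
  rw [Matrix.dotProduct_mulVec]
  nth_rewrite 1 [← hB.eq]
  rw [Matrix.vecMul_transpose, dotProduct_comm]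

def qd {r : ℕ} (B : Matrix (Fin r) (Fin r) F) (x : Fin r → F) : F := x ⬝ᵥ B.mulVec x

def Qp (ε : F) {r : ℕ} (B : Matrix (Fin r) (Fin r) F) (p : (Fin r → F) × (Fin r → F)) : F :=
  qd B p.1 - ε * qd B p.2

def act (ε a b : F) {r : ℕ} (p : (Fin r → F) × (Fin r → F)) : (Fin r → F) × (Fin r → F) :=
  (a • p.1 + (ε * b) • p.2, b • p.1 + a • p.2)

lemma qd_expand {r : ℕ} {B : Matrix (Fin r) (Fin r) F} (hB : B.IsSymm) (a c : F) (x y : Fin r → F) :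
    qd B (a • x + c • y) = a^2 * qd B x + (2*a*c) * (x ⬝ᵥ B.mulVec y) + c^2 * qd B y := by
  simp only [qd, Matrix.mulVec_add, Matrix.mulVec_smul, dotProduct_add,
    add_dotProduct, dotProduct_smul, smul_dotProduct, smul_eq_mul]
  rw [dot_symm hB y x]
  ring

lemma act_Q {r : ℕ} {B : Matrix (Fin r) (Fin r) F} (hB : B.IsSymm) (ε a b : F)
    (p : (Fin r → F) × (Fin r → F)) :
    Qp ε B (act ε a b p) = (a^2 - ε*b^2) * Qp ε B p := by
  simp only [Qp, act, qd_expand hB]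
  ring

lemma act_comp (ε a b c d : F) {r : ℕ} (p : (Fin r → F) × (Fin r → F)) :
    act ε a b (act ε c d p) = act ε (a*c + ε*b*d) (a*d + b*c) p := by
  refine Prod.ext ?_ ?_ <;> funext i <;>
    simp only [act, Pi.add_apply, Pi.smul_apply, smul_eq_mul] <;> ring

lemma act_one (ε : F) {r : ℕ} (p : (Fin r → F) × (Fin r → F)) : act ε 1 0 p = p := by
  simp [act]

lemma act_zero (ε a b : F) {r : ℕ} : act ε a b (0 : (Fin r → F) × (Fin r → F)) = 0 := by
  simp [act]

lemma aniso {ε : F} (hε : ¬ IsSquare ε) {a b : F} (h : a^2 - ε*b^2 = 0) : a = 0 ∧ b = 0 := by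
  by_cases hb : b = 0
  · subst hb
    constructor
    · have : a^2 = 0 := by linear_combination h
      exact pow_eq_zero_iff (by norm_num) |>.mp this
    · rfl
  · exfalso
    apply hε
    have ha2 : a^2 = ε * b^2 := by linear_combination h
    have : (a*b⁻¹)*(a*b⁻¹) = ε := by
      field_simp
      linear_combination ha2
    exact ⟨a*b⁻¹, this.symm⟩

lemma act_inv {ε : F} (a b : F) (h : a^2 - ε*b^2 ≠ 0) {r : ℕ} (p : (Fin r → F) × (Fin r → F)) :
    act ε (a * (a^2 - ε*b^2)⁻¹) (-(b * (a^2 - ε*b^2)⁻¹)) (act ε a b p) = p := by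
  rw [act_comp]
  have h1 : a * (a^2 - ε*b^2)⁻¹ * a + ε * -(b * (a^2 - ε*b^2)⁻¹) * b = 1 := by
    field_simp
    ring
  have h2 : a * (a^2 - ε*b^2)⁻¹ * b + -(b * (a^2 - ε*b^2)⁻¹) * a = 0 := by ring
  rw [h1, h2, act_one]

lemma act_eq_zero {ε : F} {a b : F} (h : a^2 - ε*b^2 ≠ 0) {r : ℕ}
    {p : (Fin r → F) × (Fin r → F)} (h0 : act ε a b p = 0) : p = 0 := by
  have := act_inv a b h p
  rw [h0, act_zero] at this
  exact this.symm

lemma act_sub (ε a b a' b' : F) {r : ℕ} (p : (Fin r → F) × (Fin r → F)) :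
    act ε a b p - act ε a' b' p = act ε (a - a') (b - b') p := by
  refine Prod.ext ?_ ?_ <;> funext i <;>
    simp only [act, Prod.fst_sub, Prod.snd_sub, Pi.sub_apply, Pi.add_apply, Pi.smul_apply,
      smul_eq_mul] <;> ring

lemma act_free {ε : F} (hε : ¬ IsSquare ε) {a b a' b' : F} {r : ℕ}
    {p : (Fin r → F) × (Fin r → F)} (hp : p ≠ 0) (h : act ε a b p = act ε a' b' p) :
    a = a' ∧ b = b' := by
  have hz : act ε (a - a') (b - b') p = 0 := by
    rw [← act_sub, h, sub_self]
  by_cases hn : (a-a')^2 - ε*(b-b')^2 = 0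
  · obtain ⟨h1, h2⟩ := aniso hε hn
    constructor <;> [linear_combination h1; linear_combination h2]
  · exact absurd (act_eq_zero hn hz) hp

lemma exists_norm_eq (hodd : Fintype.card F % 2 = 1) {ε : F} (hε : ¬ IsSquare ε) (c : F) :
    ∃ a b : F, a^2 - ε*b^2 = c := by
  have hε0 : ε ≠ 0 := fun h => hε ⟨0, by simp [h]⟩
  obtain ⟨a, b, hab⟩ := FiniteField.exists_root_sum_quadratic
    (f := Polynomial.X^2 - Polynomial.C c) (g := Polynomial.C (-ε) * Polynomial.X^2)
    (Polynomial.degree_X_pow_sub_C (by norm_num) c)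
    (by simpa using Polynomial.degree_C_mul_X_pow 2 (neg_ne_zero.mpr hε0))
    hodd
  refine ⟨a, b, ?_⟩
  simp only [Polynomial.eval_add, Polynomial.eval_sub, Polynomial.eval_pow, Polynomial.eval_X,
    Polynomial.eval_C, Polynomial.eval_mul] at hab
  linear_combination hab



def dblE (hch : (3:F) = 0) (r : ℕ) : ((Fin r → F) × (Fin r → F)) ≃ ((Fin r → F) × (Fin r → F)) where
  toFun p := (p.1 + p.2, p.1 - p.2)
  invFun p := (-(p.1 + p.2), -(p.1 - p.2))
  left_inv p := by
    refine Prod.ext ?_ ?_ <;> funext i <;>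
      simp only [Pi.add_apply, Pi.sub_apply, Pi.neg_apply]
    · linear_combination -(p.1 i) * hch
    · linear_combination -(p.2 i) * hch
  right_inv p := by
    refine Prod.ext ?_ ?_ <;> funext i <;>
      simp only [Pi.add_apply, Pi.sub_apply, Pi.neg_apply]
    · linear_combination -(p.1 i) * hch
    · linear_combination -(p.2 i) * hch

lemma sum_psi_dot {ψ : AddChar F ℂ} (hψ : ψ ≠ 1) {r : ℕ} (w : Fin r → F) :
    ∑ u : Fin r → F, ψ (u ⬝ᵥ w) = if w = 0 then ((Fintype.card F : ℂ)) ^ r else 0 := by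
  split_ifs with h
  · subst h
    simp [Finset.card_univ]
  · obtain ⟨i, hi⟩ : ∃ i, w i ≠ 0 := by
      by_contra hc
      push_neg at hc
      exact h (funext hc)
    obtain ⟨t, ht⟩ := AddChar.ne_one_iff.mp hψ
    set v : Fin r → F := fun j => if j = i then t * (w i)⁻¹ else 0 with hv
    have hvw : v ⬝ᵥ w = t := by
      simp only [hv, dotProduct, ite_mul, zero_mul]
      rw [Finset.sum_ite_eq' Finset.univ i]
      simp [hi]
    have key : ∑ u : Fin r → F, ψ (u ⬝ᵥ w) = ψ t * ∑ u : Fin r → F, ψ (u ⬝ᵥ w) := by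
      rw [Finset.mul_sum]
      refine (Fintype.sum_equiv (Equiv.addRight v) _ _ ?_).symm
      intro u
      rw [Equiv.coe_addRight, add_dotProduct, AddChar.map_add_eq_mul, hvw, mul_comm]
    have h0 : (ψ t - 1) * ∑ u : Fin r → F, ψ (u ⬝ᵥ w) = 0 := by
      rw [sub_mul, one_mul]
      linear_combination -key
    rcases mul_eq_zero.mp h0 with h1 | h2
    · exact absurd (by linear_combination h1) ht
    · exact h2

lemma Sc_pair (ψ : AddChar F ℂ) {r : ℕ} (B : Matrix (Fin r) (Fin r) F) (c c' : F) :
    (∑ x : Fin r → F, ψ (c * qd B x)) * (∑ y : Fin r → F, ψ (c' * qd B y)) =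
      ∑ p : (Fin r → F) × (Fin r → F), ψ (c * qd B p.1 + c' * qd B p.2) := by
  rw [Finset.sum_mul_sum, Fintype.sum_prod_type]
  exact Finset.sum_congr rfl fun x _ => Finset.sum_congr rfl fun y _ =>
    (AddChar.map_add_eq_mul ψ _ _).symm

lemma Sc_mul_Sc {ψ : AddChar F ℂ} (hψ : ψ ≠ 1) (hch : (3:F) = 0) {r : ℕ}
    {B : Matrix (Fin r) (Fin r) F} (hdet : IsUnit B.det) (hB : B.IsSymm) {c : F} (hc : c ≠ 0) :
    (∑ x : Fin r → F, ψ (c * qd B x)) * (∑ y : Fin r → F, ψ (-c * qd B y)) =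
      ((Fintype.card F : ℂ)) ^ r := by
  rw [Sc_pair]
  have key : ∀ p : (Fin r → F) × (Fin r → F),
      c * qd B (p.1 + p.2) + -c * qd B (p.1 - p.2) = p.1 ⬝ᵥ ((c • B).mulVec p.2) := by
    intro p
    simp only [qd, Matrix.mulVec_add, Matrix.mulVec_sub, dotProduct_add,
      dotProduct_sub, add_dotProduct, sub_dotProduct, Matrix.smul_mulVec,
      dotProduct_smul, smul_eq_mul]
    rw [dot_symm hB p.2 p.1]
    linear_combination (c * (p.1 ⬝ᵥ B.mulVec p.2)) * hch
  calc ∑ p : (Fin r → F) × (Fin r → F), ψ (c * qd B p.1 + -c * qd B p.2)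
      = ∑ p : (Fin r → F) × (Fin r → F),
          ψ (c * qd B (dblE hch r p).1 + -c * qd B (dblE hch r p).2) :=
        (Equiv.sum_comp (dblE hch r) (fun p => ψ (c * qd B p.1 + -c * qd B p.2))).symm
    _ = ∑ p : (Fin r → F) × (Fin r → F), ψ (p.1 ⬝ᵥ ((c • B).mulVec p.2)) := by
        refine Finset.sum_congr rfl fun p _ => ?_
        congr 1
        exact key p
    _ = ∑ y : Fin r → F, ∑ x : Fin r → F, ψ (x ⬝ᵥ ((c • B).mulVec y)) := by
        rw [Fintype.sum_prod_type]
        exact Finset.sum_comm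
    _ = ∑ y : Fin r → F, if (c • B).mulVec y = 0 then ((Fintype.card F : ℂ)) ^ r else 0 := by
        exact Finset.sum_congr rfl fun y _ => sum_psi_dot hψ _
    _ = ∑ y : Fin r → F, if y = (0 : Fin r → F) then ((Fintype.card F : ℂ)) ^ r else 0 := by
        refine Finset.sum_congr rfl fun y _ => ?_
        congr 1
        simp only [eq_iff_iff]
        constructor
        · intro h0
          have hBinj : Function.Injective B.mulVec :=
            Matrix.mulVec_injective_iff_isUnit.mpr ((Matrix.isUnit_iff_isUnit_det B).mpr hdet)
          have : B.mulVec y = 0 := by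
            have := h0
            rw [Matrix.smul_mulVec] at this
            rcases smul_eq_zero.mp this with h | h
            · exact absurd h hc
            · exact h
          have := hBinj (a₁ := y) (a₂ := 0) (by rw [this, Matrix.mulVec_zero])
          exact this
        · rintro rfl
          rw [Matrix.mulVec_zero]
    _ = ((Fintype.card F : ℂ)) ^ r := by rw [Finset.sum_ite_eq' Finset.univ 0]; simp



theorem pair_sum_eq {ψ : AddChar F ℂ} (hψ : ψ ≠ 1) (hodd : Fintype.card F % 2 = 1)
    (hq3 : 3 ≤ Fintype.card F) (hch : (3:F) = 0) {ε : F} (hε : ¬ IsSquare ε) {r : ℕ}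
    {B : Matrix (Fin r) (Fin r) F} (hdet : IsUnit B.det) (hB : B.IsSymm) :
    ∑ p : (Fin r → F) × (Fin r → F), ψ (Qp ε B p) =
      (-1)^r * ((Fintype.card F : ℂ)) ^ r := by
  classical
  set q := Fintype.card F with hq
  have hε0 : ε ≠ 0 := fun h => hε ⟨0, by simp [h]⟩
  set Nc : F → ℕ :=
    fun t => (Finset.univ.filter fun p : (Fin r → F) × (Fin r → F) => Qp ε B p = t).card with hNc
  -- fiberwise sums
  have fibsum : ∀ (φ : F → ℂ), ∑ p : (Fin r → F) × (Fin r → F), φ (Qp ε B p)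
      = ∑ t : F, (Nc t : ℂ) * φ t := by
    intro φ
    rw [← Finset.sum_fiberwise Finset.univ (Qp ε B) (fun p => φ (Qp ε B p))]
    refine Finset.sum_congr rfl fun t _ => ?_
    have hc : ∀ p ∈ Finset.univ.filter (fun p : (Fin r → F) × (Fin r → F) => Qp ε B p = t),
        φ (Qp ε B p) = φ t := fun p hp => by rw [(Finset.mem_filter.mp hp).2]
    rw [Finset.sum_congr rfl hc, Finset.sum_const, nsmul_eq_mul]
  -- Nc constant on nonzero values
  have Nconst : ∀ t : F, t ≠ 0 → Nc t = Nc 1 := by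
    intro t ht
    obtain ⟨a, b, hab⟩ := exists_norm_eq hodd hε t⁻¹
    have hn : a^2 - ε*b^2 ≠ 0 := by rw [hab]; exact inv_ne_zero ht
    refine Finset.card_bij' (fun p _ => act ε a b p)
      (fun p _ => act ε (a * (a^2-ε*b^2)⁻¹) (-(b * (a^2-ε*b^2)⁻¹)) p) ?_ ?_ ?_ ?_
    · intro p hp
      simp only [Finset.mem_filter, Finset.mem_univ, true_and] at hp ⊢
      rw [act_Q hB, hp, hab, inv_mul_cancel₀ ht]
    · intro p hp
      simp only [Finset.mem_filter, Finset.mem_univ, true_and] at hp ⊢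
      rw [act_Q hB, hp, mul_one]
      have hre : (a * (a^2-ε*b^2)⁻¹)^2 - ε * (-(b * (a^2-ε*b^2)⁻¹))^2
          = (a^2 - ε*b^2) * ((a^2-ε*b^2)⁻¹)^2 := by ring
      rw [hre, hab, inv_inv]
      field_simp
    · intro p _
      show act ε (a * (a^2-ε*b^2)⁻¹) (-(b * (a^2-ε*b^2)⁻¹)) (act ε a b p) = p
      exact act_inv a b hn p
    · intro p _
      show act ε a b (act ε (a * (a^2-ε*b^2)⁻¹) (-(b * (a^2-ε*b^2)⁻¹)) p) = p
      rw [act_comp]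
      have h1 : a * (a * (a^2-ε*b^2)⁻¹) + ε * b * (-(b * (a^2-ε*b^2)⁻¹)) = 1 := by
        field_simp
        ring
      have h2 : a * (-(b * (a^2-ε*b^2)⁻¹)) + b * (a * (a^2-ε*b^2)⁻¹) = 0 := by ring
      rw [h1, h2, act_one]
  -- total count
  have total : ∑ t : F, Nc t = q^r * q^r := by
    have h1 := Finset.card_eq_sum_card_fiberwise
      (f := Qp ε B) (s := (Finset.univ : Finset ((Fin r → F) × (Fin r → F))))
      (t := Finset.univ) (fun x _ => Finset.mem_univ _)
    have h2 : (Finset.univ : Finset ((Fin r → F) × (Fin r → F))).card = q^r * q^r := by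
      simp [Finset.card_univ, Fintype.card_fun, hq]
    rw [← h2, h1]
  -- zero fiber
  have hQ0 : Qp ε B (0 : (Fin r → F) × (Fin r → F)) = 0 := by
    simp [Qp, qd]
  set Z := Finset.univ.filter (fun p : (Fin r → F) × (Fin r → F) => p ≠ 0 ∧ Qp ε B p = 0)
    with hZ
  have hNc0 : Nc 0 = Z.card + 1 := by
    have hins : (Finset.univ.filter fun p : (Fin r → F) × (Fin r → F) => Qp ε B p = 0)
        = insert 0 Z := by
      ext p
      simp only [Finset.mem_filter, Finset.mem_univ, true_and, Finset.mem_insert, hZ]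
      constructor
      · intro h
        by_cases hp : p = 0
        · exact Or.inl hp
        · exact Or.inr ⟨hp, h⟩
      · rintro (rfl | ⟨_, h⟩)
        · exact hQ0
        · exact h
    show (Finset.univ.filter fun p : (Fin r → F) × (Fin r → F) => Qp ε B p = 0).card
      = Z.card + 1
    rw [hins, Finset.card_insert_of_notMem (by simp [hZ])]
  -- divisibility via orbits
  have hdvd : (q^2 - 1) ∣ Z.card := by
    set sd : Setoid ((Fin r → F) × (Fin r → F)) :=
      ⟨fun p p' => ∃ a b : F, (a^2 - ε*b^2 ≠ 0) ∧ p' = act ε a b p,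
        ⟨fun p => ⟨1, 0, by norm_num, (act_one ε p).symm⟩,
         by
          rintro p p' ⟨a, b, hn, rfl⟩
          refine ⟨a * (a^2-ε*b^2)⁻¹, -(b * (a^2-ε*b^2)⁻¹), ?_, (act_inv a b hn p).symm⟩
          have hre : (a * (a^2-ε*b^2)⁻¹)^2 - ε * (-(b * (a^2-ε*b^2)⁻¹))^2
              = (a^2 - ε*b^2) * ((a^2-ε*b^2)⁻¹)^2 := by ring
          rw [hre]
          exact mul_ne_zero hn (pow_ne_zero _ (inv_ne_zero hn)),
         by
          rintro p p' p'' ⟨a, b, hab, rfl⟩ ⟨c, d, hcd, rfl⟩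
          refine ⟨c*a + ε*d*b, c*b + d*a, ?_, by rw [act_comp]⟩
          have hre : (c*a + ε*d*b)^2 - ε*(c*b + d*a)^2 = (c^2 - ε*d^2)*(a^2 - ε*b^2) := by ring
          rw [hre]
          exact mul_ne_zero hcd hab⟩⟩ with hsd
    have hfib := Finset.card_eq_sum_card_fiberwise
      (f := Quotient.mk sd) (s := Z) (t := Z.image (Quotient.mk sd))
      (fun x hx => Finset.mem_image_of_mem _ hx)
    have hG : (Finset.univ.filter fun ab : F × F => ab.1^2 - ε*ab.2^2 ≠ 0).card = q^2 - 1 := by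
      have h1 : (Finset.univ.filter fun ab : F × F => ¬(ab.1^2 - ε*ab.2^2 ≠ 0)).card = 1 := by
        rw [Finset.card_eq_one]
        refine ⟨(0,0), ?_⟩
        ext ⟨a,b⟩
        simp only [Finset.mem_filter, Finset.mem_univ, true_and, not_not,
          Finset.mem_singleton, Prod.mk.injEq]
        constructor
        · intro h
          exact aniso hε h
        · rintro ⟨rfl, rfl⟩
          ring
      have h2 := Finset.card_filter_add_card_filter_not
        (s := (Finset.univ : Finset (F × F))) (p := fun ab : F × F => ab.1^2 - ε*ab.2^2 ≠ 0)
      have h3 : (Finset.univ : Finset (F × F)).card = q^2 := by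
        simp [Finset.card_univ, Fintype.card_prod, sq, hq]
      omega
    have hfibcard : ∀ c ∈ Z.image (Quotient.mk sd),
        (Z.filter fun p => Quotient.mk sd p = c).card = q^2 - 1 := by
      intro c hc
      obtain ⟨p₀, hp₀Z, hp₀⟩ := Finset.mem_image.mp hc
      have hp₀' := Finset.mem_filter.mp hp₀Z
      have hrw : (Z.filter fun p => Quotient.mk sd p = c).card
          = (Finset.univ.filter fun ab : F × F => ab.1^2 - ε*ab.2^2 ≠ 0).card := by
        refine (Finset.card_bij (fun ab _ => act ε ab.1 ab.2 p₀) ?_ ?_ ?_).symm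
        · rintro ⟨a, b⟩ hab
          simp only [Finset.mem_filter, Finset.mem_univ, true_and] at hab
          simp only [Finset.mem_filter, hZ, Finset.mem_univ, true_and]
          refine ⟨⟨?_, ?_⟩, ?_⟩
          · intro h0
            exact hp₀'.2.1 (act_eq_zero hab h0)
          · rw [act_Q hB, hp₀'.2.2, mul_zero]
          · rw [← hp₀]
            have hrel : sd.r p₀ (act ε a b p₀) := ⟨a, b, hab, rfl⟩
            exact (Quotient.sound hrel).symm
        · rintro ⟨a, b⟩ ha ⟨a', b'⟩ ha' hee
          obtain ⟨h1, h2⟩ := act_free hε hp₀'.2.1 hee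
          exact Prod.ext h1 h2
        · intro p hp
          simp only [Finset.mem_filter] at hp
          have : Quotient.mk sd p₀ = Quotient.mk sd p := hp₀.trans hp.2.symm
          obtain ⟨a, b, hn, hpe⟩ := Quotient.exact this
          refine ⟨(a, b), ?_, ?_⟩
          · simp only [Finset.mem_filter, Finset.mem_univ, true_and]
            exact hn
          · exact hpe.symm
      rw [hrw, hG]
    refine ⟨(Z.image (Quotient.mk sd)).card, ?_⟩
    rw [hfib, Finset.sum_congr rfl hfibcard, Finset.sum_const, smul_eq_mul, Nat.mul_comm]
  -- sums of character values
  have hpsi_all : ∑ t : F, ψ t = 0 := AddChar.sum_eq_zero_iff_ne_zero.mpr hψ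
  have hpsi_er : ∑ t ∈ Finset.univ.erase (0:F), ψ t = -1 := by
    have := Finset.add_sum_erase Finset.univ ψ (Finset.mem_univ (0:F))
    rw [AddChar.map_zero_eq_one] at this
    linear_combination this + hpsi_all
  have hpsi_all' : ∑ t : F, ψ (-t) = 0 := by
    rw [← hpsi_all]
    exact Fintype.sum_equiv (Equiv.neg F) _ _ (fun t => by simp)
  have hpsi_er' : ∑ t ∈ Finset.univ.erase (0:F), ψ (-t) = -1 := by
    have := Finset.add_sum_erase Finset.univ (fun t => ψ (-t)) (Finset.mem_univ (0:F))
    simp only [neg_zero, AddChar.map_zero_eq_one] at this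
    linear_combination this + hpsi_all'
  -- T and T' as integer combinations
  have hsplit : ∀ (φ : F → ℂ), φ 0 = 1 → (∑ t ∈ Finset.univ.erase (0:F), φ t = -1) →
      ∑ t : F, (Nc t : ℂ) * φ t = (Nc 0 : ℂ) - (Nc 1 : ℂ) := by
    intro φ h0 her
    rw [← Finset.add_sum_erase Finset.univ (fun t => (Nc t : ℂ) * φ t) (Finset.mem_univ (0:F)),
      h0, mul_one]
    have hcongr : ∀ t ∈ Finset.univ.erase (0:F), (Nc t : ℂ) * φ t = (Nc 1 : ℂ) * φ t :=
      fun t ht => by rw [Nconst t (Finset.mem_erase.mp ht).1]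
    rw [Finset.sum_congr rfl hcongr, ← Finset.mul_sum, her]
    ring
  have hT : ∑ p : (Fin r → F) × (Fin r → F), ψ (Qp ε B p) = (Nc 0 : ℂ) - (Nc 1 : ℂ) := by
    rw [fibsum (fun t => ψ t)]
    exact hsplit _ (AddChar.map_zero_eq_one ψ) hpsi_er
  have hT' : ∑ p : (Fin r → F) × (Fin r → F), ψ (-(Qp ε B p)) = (Nc 0 : ℂ) - (Nc 1 : ℂ) := by
    rw [fibsum (fun t => ψ (-t))]
    exact hsplit _ (by rw [neg_zero, AddChar.map_zero_eq_one]) hpsi_er'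
  -- product identity
  have hprod : ((Nc 0 : ℂ) - (Nc 1 : ℂ)) * ((Nc 0 : ℂ) - (Nc 1 : ℂ))
      = ((q : ℂ))^r * ((q : ℂ))^r := by
    have e1 : ∑ p : (Fin r → F) × (Fin r → F), ψ (Qp ε B p)
        = (∑ x : Fin r → F, ψ ((1:F) * qd B x)) * (∑ y : Fin r → F, ψ ((-ε) * qd B y)) := by
      rw [Sc_pair]
      exact Finset.sum_congr rfl fun p _ => by congr 1; simp only [Qp]; ring
    have e2 : ∑ p : (Fin r → F) × (Fin r → F), ψ (-(Qp ε B p))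
        = (∑ x : Fin r → F, ψ ((-1:F) * qd B x)) * (∑ y : Fin r → F, ψ (ε * qd B y)) := by
      rw [Sc_pair]
      exact Finset.sum_congr rfl fun p _ => by congr 1; simp only [Qp]; ring
    have h1 : (∑ x : Fin r → F, ψ ((1:F) * qd B x)) * (∑ y : Fin r → F, ψ (-(1:F) * qd B y))
        = ((q : ℂ))^r := Sc_mul_Sc hψ hch hdet hB one_ne_zero
    have h2 : (∑ x : Fin r → F, ψ (ε * qd B x)) * (∑ y : Fin r → F, ψ (-ε * qd B y))
        = ((q : ℂ))^r := Sc_mul_Sc hψ hch hdet hB hε0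
    calc ((Nc 0 : ℂ) - (Nc 1 : ℂ)) * ((Nc 0 : ℂ) - (Nc 1 : ℂ))
        = (∑ p : (Fin r → F) × (Fin r → F), ψ (Qp ε B p))
          * (∑ p : (Fin r → F) × (Fin r → F), ψ (-(Qp ε B p))) := by rw [hT, hT']
      _ = ((∑ x : Fin r → F, ψ ((1:F) * qd B x)) * (∑ y : Fin r → F, ψ (-(1:F) * qd B y)))
          * ((∑ x : Fin r → F, ψ (ε * qd B x)) * (∑ y : Fin r → F, ψ (-ε * qd B y))) := by
          rw [e1, e2]
          ring
      _ = ((q : ℂ))^r * ((q : ℂ))^r := by rw [h1, h2]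
  -- integer endgame
  set Q : ℤ := (q : ℤ) with hQdef
  have hQ3 : (3:ℤ) ≤ Q := by rw [hQdef]; exact_mod_cast hq3
  have hd2 : ((Nc 0 : ℤ) - (Nc 1 : ℤ)) * ((Nc 0 : ℤ) - (Nc 1 : ℤ)) = Q^r * Q^r := by
    rw [hQdef]
    exact_mod_cast hprod
  have habs : (Nc 0 : ℤ) - (Nc 1 : ℤ) = Q^r ∨ (Nc 0 : ℤ) - (Nc 1 : ℤ) = -(Q^r) := by
    refine abs_eq_abs.mp ((sq_eq_sq_iff_abs_eq_abs _ _).mp ?_)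
    rw [pow_two, pow_two]
    exact hd2
  have htotZ : (Nc 0 : ℤ) + (Q - 1) * (Nc 1 : ℤ) = Q^r * Q^r := by
    have h1 : Nc 0 + (q - 1) * Nc 1 = q^r * q^r := by
      rw [← total, ← Finset.add_sum_erase Finset.univ Nc (Finset.mem_univ (0:F))]
      congr 1
      rw [Finset.sum_congr rfl (fun t ht => Nconst t (Finset.mem_erase.mp ht).1),
        Finset.sum_const, smul_eq_mul]
      congr 1
      rw [Finset.card_erase_of_mem (Finset.mem_univ _), Finset.card_univ]
    have h1' : (Nc 0 : ℤ) + ((q-1 : ℕ) : ℤ) * Nc 1 = Q^r * Q^r := by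
      rw [hQdef]
      exact_mod_cast h1
    rwa [Nat.cast_sub (by omega), Nat.cast_one] at h1'
  have hdvdZ : (Q^2 - 1) ∣ ((Nc 0 : ℤ) - 1) := by
    obtain ⟨k, hk⟩ := hdvd
    refine ⟨(k : ℤ), ?_⟩
    have hc1 : (Nc 0 : ℤ) = (Z.card : ℤ) + 1 := by exact_mod_cast hNc0
    have h2 : (Z.card : ℤ) = ((q^2 - 1 : ℕ) : ℤ) * k := by exact_mod_cast hk
    rw [hc1, h2, Nat.cast_sub (by nlinarith : 1 ≤ q^2)]
    push_cast
    ring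
  set d : ℤ := (Nc 0 : ℤ) - (Nc 1 : ℤ) with hdd
  have hQQ : (Q^2)^r = Q^r * Q^r := by rw [← pow_mul, two_mul, pow_add]
  have hkey : (Q + 1) ∣ (d - 1) := by
    have he : (Q-1)*(d-1) = Q*((Nc 0 : ℤ) - 1) - ((Q^2)^r - 1) := by
      rw [hQQ]
      linear_combination (Q-1) * hdd - htotZ
    have h1 : (Q^2 - 1) ∣ (Q - 1) * (d - 1) := by
      rw [he]
      exact dvd_sub (Dvd.dvd.mul_left hdvdZ Q)
        (by simpa using sub_dvd_pow_sub_pow (Q^2) 1 r)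
    have hfac : (Q - 1) * (Q + 1) ∣ (Q - 1) * (d - 1) := by
      have hq21 : Q^2 - 1 = (Q-1)*(Q+1) := by ring
      rwa [hq21] at h1
    exact (mul_dvd_mul_iff_left (by omega : (Q - 1) ≠ 0)).mp hfac
  have hqr1 : (Q + 1) ∣ Q^r - (-1)^r := by
    simpa using sub_dvd_pow_sub_pow Q (-1) r
  have hdval : d = (-1)^r * Q^r := by
    rcases habs with h | h
    · rcases Nat.even_or_odd r with hre | hro
      · rw [h, hre.neg_one_pow, one_mul]
      · exfalso
        rw [hro.neg_one_pow] at hqr1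
        rw [h] at hkey
        have hx := dvd_sub hqr1 hkey
        rw [show Q^r - (-1) - (Q^r - 1) = 2 by ring] at hx
        have := Int.le_of_dvd (by norm_num) hx
        omega
    · rcases Nat.even_or_odd r with hre | hro
      · exfalso
        rw [hre.neg_one_pow] at hqr1
        rw [h] at hkey
        have hx := dvd_add hqr1 hkey
        rw [show Q^r - 1 + (-(Q^r) - 1) = -2 by ring] at hx
        have hx2 : (Q + 1) ∣ (2:ℤ) := (dvd_neg (α := ℤ)).mp hx
        have := Int.le_of_dvd (by norm_num) hx2
        omega
      · rw [h, hro.neg_one_pow]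
        ring
  rw [hT]
  calc (Nc 0 : ℂ) - (Nc 1 : ℂ) = ((d : ℤ) : ℂ) := by rw [hdd]; push_cast; ring
    _ = (-1)^r * ((q:ℕ) : ℂ)^r := by rw [hdval, hQdef]; push_cast; ring



def colE (r : ℕ) : ((Fin r → F) × (Fin r → F)) ≃ Matrix (Fin r) (Fin 2) F where
  toFun p := Matrix.of fun i j => if j = 0 then p.1 i else p.2 i
  invFun h := (fun i => h i 0, fun i => h i 1)
  left_inv p := by
    refine Prod.ext ?_ ?_ <;> funext i <;> simp
  right_inv h := by
    ext i j
    fin_cases j <;> simp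

lemma tr2 (ε : F) (M : Matrix (Fin 2) (Fin 2) F) :
    (!![1,0;0,-ε] * M).trace = M 0 0 - ε * M 1 1 := by
  simp [Matrix.trace_fin_two, Matrix.mul_apply, Fin.sum_univ_two, Matrix.vecMul, dotProduct]
  ring

lemma diag_entry {r : ℕ} (B : Matrix (Fin r) (Fin r) F) (h : Matrix (Fin r) (Fin 2) F)
    (k : Fin 2) :
    (hᵀ * B * h) k k = (fun i => h i k) ⬝ᵥ B.mulVec (fun i => h i k) := by
  simp only [Matrix.mul_apply, Matrix.transpose_apply, dotProduct, Matrix.mulVec,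
    Finset.sum_mul, Finset.mul_sum]
  conv_lhs => rw [Finset.sum_comm]
  exact Finset.sum_congr rfl fun i _ => Finset.sum_congr rfl fun j _ => by ring

lemma hsum_eq (ψ : AddChar F ℂ) (ε : F) {r : ℕ} (B : Matrix (Fin r) (Fin r) F) :
    ∑ h : Matrix (Fin r) (Fin 2) F, ψ ((!![1,0;0,-ε] * (hᵀ * B * h)).trace)
      = ∑ p : (Fin r → F) × (Fin r → F), ψ (Qp ε B p) := by
  rw [← Equiv.sum_comp (colE r) (fun h : Matrix (Fin r) (Fin 2) F =>
    ψ ((!![1,0;0,-ε] * (hᵀ * B * h)).trace))]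
  refine Finset.sum_congr rfl fun p _ => ?_
  congr 1
  rw [tr2, diag_entry, diag_entry]
  have h0 : (fun i => (colE r p) i 0) = p.1 := by funext i; simp [colE]
  have h1 : (fun i => (colE r p) i 1) = p.2 := by funext i; simp [colE]
  rw [h0, h1]
  rfl



def Ncard (F : Type*) [Field F] [Fintype F] [DecidableEq F]
    (κ : Type*) [Fintype κ] [DecidableEq κ] : ℕ :=
  (Finset.univ.filter fun B : Matrix κ κ F => IsUnit B.det ∧ B.IsSymm).card

lemma isSymm_submatrix_iff {κ κ' : Type*} (e : κ ≃ κ') (B : Matrix κ' κ' F) :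
    (B.submatrix e e).IsSymm ↔ B.IsSymm := by
  constructor
  · intro h
    have := congrArg (fun M => M.submatrix e.symm e.symm) h
    exact (by simpa [Matrix.transpose_submatrix, Matrix.submatrix_submatrix] using this : Bᵀ = B)
  · intro h
    unfold Matrix.IsSymm at h ⊢
    rw [Matrix.transpose_submatrix, h]

lemma Ncard_congr {κ κ' : Type*} [Fintype κ] [DecidableEq κ] [Fintype κ'] [DecidableEq κ']
    (e : κ ≃ κ') : Ncard F κ = Ncard F κ' := by
  unfold Ncard
  refine (Finset.card_bij (fun B _ => B.submatrix e e) ?_ ?_ ?_).symm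
  · intro B hB
    simp only [Finset.mem_filter, Finset.mem_univ, true_and] at hB ⊢
    exact ⟨by rw [Matrix.det_submatrix_equiv_self]; exact hB.1, (isSymm_submatrix_iff e B).mpr hB.2⟩
  · intro B₁ _ B₂ _ h
    have := congrArg (fun M => M.submatrix e.symm e.symm) h
    simpa [Matrix.submatrix_submatrix] using this
  · intro B hB
    simp only [Finset.mem_filter, Finset.mem_univ, true_and] at hB
    refine ⟨B.submatrix e.symm e.symm, ?_, by simp [Matrix.submatrix_submatrix]⟩
    simp only [Finset.mem_filter, Finset.mem_univ, true_and]
    exact ⟨by rw [Matrix.det_submatrix_equiv_self]; exact hB.1, (isSymm_submatrix_iff e.symm B).mpr hB.2⟩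

lemma Ncard_fin_zero : Ncard F (Fin 0) = 1 := by
  unfold Ncard
  have huniv : (Finset.univ.filter fun B : Matrix (Fin 0) (Fin 0) F =>
      IsUnit B.det ∧ B.IsSymm) = {0} := by
    ext B
    simp only [Finset.mem_filter, Finset.mem_univ, true_and, Finset.mem_singleton]
    constructor
    · intro _
      ext i j
      exact i.elim0
    · rintro rfl
      refine ⟨by rw [Matrix.det_fin_zero]; exact isUnit_one, ?_⟩
      ext i j
      exact i.elim0
  rw [huniv, Finset.card_singleton]

lemma Ncard_fin_one : Ncard F (Fin 1) = Fintype.card F - 1 := by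
  unfold Ncard
  have hcard : (Finset.univ.filter fun a : F => a ≠ 0).card = Fintype.card F - 1 := by
    rw [Finset.filter_ne' Finset.univ 0, Finset.card_erase_of_mem (Finset.mem_univ _),
      Finset.card_univ]
  rw [← hcard]
  refine Finset.card_bij (fun B _ => B 0 0) ?_ ?_ ?_
  · intro B hB
    simp only [Finset.mem_filter, Finset.mem_univ, true_and] at hB ⊢
    rw [Matrix.det_fin_one] at hB
    exact hB.1.ne_zero
  · intro B₁ h₁ B₂ h₂ h
    ext i j
    rw [Fin.eq_zero i, Fin.eq_zero j]
    exact h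
  · intro a ha
    simp only [Finset.mem_filter, Finset.mem_univ, true_and] at ha
    refine ⟨Matrix.of fun _ _ => a, ?_, rfl⟩
    simp only [Finset.mem_filter, Finset.mem_univ, true_and]
    constructor
    · rw [Matrix.det_fin_one]
      exact (isUnit_iff_ne_zero).mpr ha
    · ext i j
      rfl

lemma exists_mulVec_eq {κ : Type*} [Fintype κ] [DecidableEq κ] {v w : κ → F}
    (hv : v ≠ 0) (hw : w ≠ 0) :
    ∃ Q : Matrix κ κ F, IsUnit Q.det ∧ Q.mulVec v = w := by
  have hv' : LinearIndepOn F id ({v} : Set (κ → F)) :=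
    LinearIndepOn.singleton hv
  have hw' : LinearIndepOn F id ({w} : Set (κ → F)) :=
    LinearIndepOn.singleton hw
  let bv := Module.Basis.extend hv'
  let bw := Module.Basis.extend hw'
  let e0 := bv.indexEquiv bw
  let iv : ↥(hv'.extend (Set.subset_univ _)) := ⟨v, hv'.subset_extend _ rfl⟩
  let iw : ↥(hw'.extend (Set.subset_univ _)) := ⟨w, hw'.subset_extend _ rfl⟩
  let e := e0.trans (Equiv.swap (e0 iv) iw)
  let f := bv.equiv bw e
  have hfv : f v = w := by
    have h1 : bv iv = v := Module.Basis.extend_apply_self hv' iv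
    have h2 : bw iw = w := Module.Basis.extend_apply_self hw' iw
    calc f v = f (bv iv) := by rw [h1]
      _ = bw (e iv) := Module.Basis.equiv_apply bv iv bw e
      _ = bw (Equiv.swap (e0 iv) iw (e0 iv)) := rfl
      _ = bw iw := by rw [Equiv.swap_apply_left]
      _ = w := h2
  refine ⟨LinearMap.toMatrix' (f : (κ → F) →ₗ[F] (κ → F)), ?_, ?_⟩
  · rw [LinearMap.det_toMatrix']
    exact f.isUnit_det'
  · rw [← Matrix.toLin'_apply, Matrix.toLin'_toMatrix']
    exact hfv



section blocks

variable {κ : Type*} [Fintype κ] [DecidableEq κ]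

lemma vecMulVec_isSymm (v : κ → F) : (vecMulVec v v).IsSymm := by
  unfold Matrix.IsSymm
  ext i j
  simp [Matrix.vecMulVec_apply, mul_comm]

lemma block_det (a : F) (ha : a ≠ 0) (v : κ → F) (D : Matrix κ κ F) :
    (fromBlocks (Matrix.of fun _ _ => a) (Matrix.of fun (_ : Fin 1) j => v j)
      (Matrix.of fun i (_ : Fin 1) => v i) D).det
      = a * (D - a⁻¹ • vecMulVec v v).det := by
  letI : Invertible (Matrix.of fun _ _ => a : Matrix (Fin 1) (Fin 1) F) :=
    ⟨Matrix.of fun _ _ => a⁻¹,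
     by ext i j; simp [Matrix.mul_apply, inv_mul_cancel₀ ha, Matrix.one_apply, Fin.eq_zero i,
        Fin.eq_zero j],
     by ext i j; simp [Matrix.mul_apply, mul_inv_cancel₀ ha, Matrix.one_apply, Fin.eq_zero i,
        Fin.eq_zero j]⟩
  rw [Matrix.det_fromBlocks₁₁]
  have hinv : (⅟(Matrix.of fun _ _ => a : Matrix (Fin 1) (Fin 1) F)) =
      Matrix.of fun _ _ => a⁻¹ := rfl
  congr 1
  · rw [Matrix.det_fin_one]
    rfl
  · congr 1
    ext i j
    simp only [hinv, Matrix.mul_apply, Fin.sum_univ_one, Matrix.of_apply, Matrix.sub_apply,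
      Matrix.smul_apply, Matrix.vecMulVec_apply, smul_eq_mul]
    ring

lemma block_symm (a : F) (v : κ → F) {D : Matrix κ κ F} (hD : D.IsSymm) :
    (fromBlocks (Matrix.of fun _ _ => a) (Matrix.of fun (_ : Fin 1) j => v j)
      (Matrix.of fun i (_ : Fin 1) => v i) D).IsSymm := by
  rw [Matrix.isSymm_fromBlocks_iff]
  refine ⟨?_, ?_, ?_, hD⟩
  · unfold Matrix.IsSymm
    ext i j
    rfl
  · ext i j
    rfl
  · ext i j
    rfl

lemma card_stratum1 :
    (Finset.univ.filter fun B : Matrix (Fin 1 ⊕ κ) (Fin 1 ⊕ κ) F =>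
        (IsUnit B.det ∧ B.IsSymm) ∧ B (Sum.inl 0) (Sum.inl 0) ≠ 0).card
      = (Fintype.card F - 1) * (Fintype.card F ^ Fintype.card κ * Ncard F κ) := by
  have hScard : ((Finset.univ.filter fun a : F => a ≠ 0) ×ˢ
      ((Finset.univ : Finset (κ → F)) ×ˢ
        (Finset.univ.filter fun C : Matrix κ κ F => IsUnit C.det ∧ C.IsSymm))).card
      = (Fintype.card F - 1) * (Fintype.card F ^ Fintype.card κ * Ncard F κ) := by
    rw [Finset.card_product, Finset.card_product, Finset.card_univ, Fintype.card_fun]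
    congr 2
    rw [Finset.filter_ne' Finset.univ 0, Finset.card_erase_of_mem (Finset.mem_univ _),
      Finset.card_univ]
  rw [← hScard]
  refine (Finset.card_bij (fun x _ => fromBlocks (Matrix.of fun _ _ => x.1)
    (Matrix.of fun (_ : Fin 1) j => x.2.1 j) (Matrix.of fun i (_ : Fin 1) => x.2.1 i)
    (x.2.2 + x.1⁻¹ • vecMulVec x.2.1 x.2.1)) ?_ ?_ ?_).symm
  · rintro ⟨a, v, C⟩ hx
    simp only [Finset.mem_product, Finset.mem_filter, Finset.mem_univ, true_and] at hx
    obtain ⟨ha, hC1, hC2⟩ := hx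
    simp only [Finset.mem_filter, Finset.mem_univ, true_and]
    refine ⟨⟨?_, ?_⟩, ?_⟩
    · rw [block_det a ha, add_sub_cancel_right]
      exact (Ne.isUnit ha).mul hC1
    · exact block_symm a v (hC2.add ((vecMulVec_isSymm v).smul _))
    · simpa [Matrix.fromBlocks_apply₁₁] using ha
  · rintro ⟨a, v, C⟩ hx ⟨a', v', C'⟩ hx' hEq
    have ha : a = a' := by
      have := congrArg (fun M => M (Sum.inl 0) (Sum.inl 0)) hEq
      simpa [Matrix.fromBlocks_apply₁₁] using this
    have hv : v = v' := by
      funext j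
      have := congrArg (fun M => M (Sum.inr j) (Sum.inl 0)) hEq
      simpa [Matrix.fromBlocks_apply₂₁] using this
    subst ha hv
    have hD := congrArg Matrix.toBlocks₂₂ hEq
    simp only [Matrix.toBlocks_fromBlocks₂₂] at hD
    have hC : C = C' := add_right_cancel hD
    rw [hC]
  · intro B hB
    simp only [Finset.mem_filter, Finset.mem_univ, true_and] at hB
    obtain ⟨⟨hdet, hsym⟩, hne⟩ := hB
    set a : F := B (Sum.inl 0) (Sum.inl 0) with hadef
    set v : κ → F := fun i => B (Sum.inr i) (Sum.inl 0) with hvdef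
    set C : Matrix κ κ F := B.toBlocks₂₂ - a⁻¹ • vecMulVec v v with hCdef
    have hBeq : B = fromBlocks (Matrix.of fun _ _ => a) (Matrix.of fun (_ : Fin 1) j => v j)
        (Matrix.of fun i (_ : Fin 1) => v i) (C + a⁻¹ • vecMulVec v v) := by
      rw [hCdef, sub_add_cancel]
      conv_lhs => rw [← Matrix.fromBlocks_toBlocks B]
      have h11 : B.toBlocks₁₁ = (Matrix.of fun _ _ => a : Matrix (Fin 1) (Fin 1) F) := by
        ext i j
        rw [Fin.eq_zero i, Fin.eq_zero j]
        rfl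
      have h12 : B.toBlocks₁₂ = (Matrix.of fun (_ : Fin 1) j => v j) := by
        ext i j
        rw [Fin.eq_zero i]
        exact hsym.apply (Sum.inr j) (Sum.inl 0)
      have h21 : B.toBlocks₂₁ = (Matrix.of fun i (_ : Fin 1) => v i) := by
        ext i j
        rw [Fin.eq_zero j]
        rfl
      rw [h11, h12, h21]
    have hdetC : IsUnit C.det := by
      rw [hBeq, block_det a hne, add_sub_cancel_right] at hdet
      exact isUnit_of_mul_isUnit_right hdet
    have hCsym : C.IsSymm := by
      unfold Matrix.IsSymm
      ext i j
      simp only [hCdef, Matrix.transpose_apply, Matrix.sub_apply, Matrix.smul_apply,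
        Matrix.vecMulVec_apply, smul_eq_mul, Matrix.toBlocks₂₂, Matrix.of_apply]
      rw [hsym.apply (Sum.inr i) (Sum.inr j)]
      ring
    refine ⟨⟨a, v, C⟩, ?_, hBeq.symm⟩
    simp only [Finset.mem_product, Finset.mem_filter, Finset.mem_univ, true_and]
    exact ⟨hne, hdetC, hCsym⟩

end blocks


section corner

variable {κ : Type*} [Fintype κ] [DecidableEq κ]

abbrev Am (c : F) : Matrix (Fin 1 ⊕ Fin 1) (Fin 1 ⊕ Fin 1) F :=
  fromBlocks (Matrix.of fun _ _ => 0) (Matrix.of fun _ _ => 1)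
    (Matrix.of fun _ _ => 1) (Matrix.of fun _ _ => c)

abbrev Ami (c : F) : Matrix (Fin 1 ⊕ Fin 1) (Fin 1 ⊕ Fin 1) F :=
  fromBlocks (Matrix.of fun _ _ => -c) (Matrix.of fun _ _ => 1)
    (Matrix.of fun _ _ => 1) (Matrix.of fun _ _ => 0)

abbrev Lm (d : κ → F) : Matrix κ (Fin 1 ⊕ Fin 1) F :=
  Matrix.of fun i s => Sum.elim (fun _ => (0:F)) (fun _ => d i) s

lemma Am_mul_Ami (c : F) : Am c * Ami c = 1 := by
  ext x y
  rcases x with x | x <;> rcases y with y | y <;>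
    rw [Fin.eq_zero x, Fin.eq_zero y] <;>
    simp [Matrix.mul_apply, Fintype.sum_sum_type, Matrix.one_apply]

lemma Ami_mul_Am (c : F) : Ami c * Am c = 1 := by
  ext x y
  rcases x with x | x <;> rcases y with y | y <;>
    rw [Fin.eq_zero x, Fin.eq_zero y] <;>
    simp [Matrix.mul_apply, Fintype.sum_sum_type, Matrix.one_apply]

lemma schur_zero (c : F) (d : κ → F) : Lm d * Ami c * (Lm d)ᵀ = 0 := by
  ext i j
  simp [Matrix.mul_apply, Fintype.sum_sum_type]

lemma Am_symm (c : F) : (Am c).IsSymm := by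
  unfold Matrix.IsSymm
  ext x y
  rcases x with x | x <;> rcases y with y | y <;> rfl

lemma card_corner_piece :
    (Finset.univ.filter fun B : Matrix ((Fin 1 ⊕ Fin 1) ⊕ κ) ((Fin 1 ⊕ Fin 1) ⊕ κ) F =>
        (IsUnit B.det ∧ B.IsSymm) ∧ B (Sum.inl (Sum.inl 0)) (Sum.inl (Sum.inl 0)) = 0 ∧
          B (Sum.inl (Sum.inr 0)) (Sum.inl (Sum.inl 0)) = 1 ∧
          ∀ j : κ, B (Sum.inr j) (Sum.inl (Sum.inl 0)) = 0).card
      = Fintype.card F * (Fintype.card F ^ Fintype.card κ * Ncard F κ) := by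
  have hScard : ((Finset.univ : Finset F) ×ˢ ((Finset.univ : Finset (κ → F)) ×ˢ
      (Finset.univ.filter fun C : Matrix κ κ F => IsUnit C.det ∧ C.IsSymm))).card
      = Fintype.card F * (Fintype.card F ^ Fintype.card κ * Ncard F κ) := by
    rw [Finset.card_product, Finset.card_product, Finset.card_univ, Finset.card_univ,
      Fintype.card_fun]
    rfl
  rw [← hScard]
  refine (Finset.card_bij
    (fun x _ => fromBlocks (Am x.1) (Lm x.2.1)ᵀ (Lm x.2.1) x.2.2) ?_ ?_ ?_).symm
  · rintro ⟨c, d, D⟩ hx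
    simp only [Finset.mem_product, Finset.mem_filter, Finset.mem_univ, true_and] at hx
    obtain ⟨hD1, hD2⟩ := hx
    simp only [Finset.mem_filter, Finset.mem_univ, true_and]
    letI : Invertible (Am c) := ⟨Ami c, Ami_mul_Am c, Am_mul_Ami c⟩
    refine ⟨⟨?_, ?_⟩, ?_, ?_, ?_⟩
    · rw [Matrix.det_fromBlocks₁₁]
      have hio : ⅟(Am c) = Ami c := rfl
      rw [hio, schur_zero, sub_zero]
      exact (Matrix.isUnit_det_of_invertible (Am c)).mul hD1
    · rw [Matrix.isSymm_fromBlocks_iff]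
      exact ⟨Am_symm c, by rw [Matrix.transpose_transpose], rfl, hD2⟩
    · rfl
    · rfl
    · intro j
      rfl
  · rintro ⟨c, d, D⟩ hx ⟨c', d', D'⟩ hx' hEq
    have hc : c = c' := by
      have := congrArg (fun M => M (Sum.inl (Sum.inr 0)) (Sum.inl (Sum.inr 0))) hEq
      simpa using this
    have hd : d = d' := by
      funext j
      have := congrArg (fun M => M (Sum.inr j) (Sum.inl (Sum.inr 0))) hEq
      simpa using this
    have hD : D = D' := by
      have := congrArg Matrix.toBlocks₂₂ hEq
      simpa [Matrix.toBlocks_fromBlocks₂₂] using this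
    rw [hc, hd, hD]
  · intro B hB
    simp only [Finset.mem_filter, Finset.mem_univ, true_and] at hB
    obtain ⟨⟨hdet, hsym⟩, h00, h10, hcol⟩ := hB
    set c : F := B (Sum.inl (Sum.inr 0)) (Sum.inl (Sum.inr 0)) with hcdef
    set d : κ → F := fun j => B (Sum.inr j) (Sum.inl (Sum.inr 0)) with hddef
    set D : Matrix κ κ F := B.toBlocks₂₂ with hDdef
    have hBeq : B = fromBlocks (Am c) (Lm d)ᵀ (Lm d) D := by
      conv_lhs => rw [← Matrix.fromBlocks_toBlocks B]
      have h11 : B.toBlocks₁₁ = Am c := by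
        ext x y
        rcases x with x | x <;> rcases y with y | y <;> rw [Fin.eq_zero x, Fin.eq_zero y]
        · exact h00
        · rw [show (Am c) (Sum.inl 0) (Sum.inr 0) = 1 from rfl]
          rw [← h10]
          exact hsym.apply (Sum.inl (Sum.inr 0)) (Sum.inl (Sum.inl 0))
        · exact h10
        · rfl
      have h21 : B.toBlocks₂₁ = Lm d := by
        ext j s
        rcases s with s | s <;> rw [Fin.eq_zero s]
        · exact hcol j
        · rfl
      have h12 : B.toBlocks₁₂ = (Lm d)ᵀ := by
        ext s j
        rcases s with s | s <;> rw [Fin.eq_zero s]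
        · rw [show ((Lm d)ᵀ : Matrix (Fin 1 ⊕ Fin 1) κ F) (Sum.inl 0) j = 0 from rfl]
          rw [← hcol j]
          exact hsym.apply (Sum.inr j) (Sum.inl (Sum.inl 0))
        · rw [show ((Lm d)ᵀ : Matrix (Fin 1 ⊕ Fin 1) κ F) (Sum.inr 0) j = d j from rfl]
          rw [hddef]
          exact hsym.apply (Sum.inr j) (Sum.inl (Sum.inr 0))
      rw [h11, h12, h21]
    have hDsym : D.IsSymm := by
      unfold Matrix.IsSymm
      ext i j
      exact hsym.apply (Sum.inr i) (Sum.inr j)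
    have hDdet : IsUnit D.det := by
      letI : Invertible (Am c) := ⟨Ami c, Ami_mul_Am c, Am_mul_Ami c⟩
      rw [hBeq, Matrix.det_fromBlocks₁₁] at hdet
      have hio : ⅟(Am c) = Ami c := rfl
      rw [hio, schur_zero, sub_zero] at hdet
      exact isUnit_of_mul_isUnit_right hdet
    refine ⟨⟨c, d, D⟩, ?_, hBeq.symm⟩
    simp only [Finset.mem_product, Finset.mem_filter, Finset.mem_univ, true_and]
    exact ⟨hDdet, hDsym⟩

end corner


-- ===== conjugation transport =====
section conj

variable {μ : Type*} [Fintype μ] [DecidableEq μ]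

def Pm (Q : Matrix μ μ F) : Matrix (Fin 1 ⊕ μ) (Fin 1 ⊕ μ) F := fromBlocks 1 0 0 Q

lemma Pm_transpose (Q : Matrix μ μ F) : (Pm Q)ᵀ = Pm Qᵀ := by
  unfold Pm
  rw [Matrix.fromBlocks_transpose, Matrix.transpose_one, Matrix.transpose_zero,
    Matrix.transpose_zero]

lemma Pm_mul (Q Q' : Matrix μ μ F) : Pm Q * Pm Q' = Pm (Q * Q') := by
  unfold Pm
  rw [Matrix.fromBlocks_multiply]
  simp

lemma Pm_one : Pm (1 : Matrix μ μ F) = 1 := by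
  unfold Pm
  exact Matrix.fromBlocks_one

lemma Pm_det (Q : Matrix μ μ F) : (Pm Q).det = Q.det := by
  unfold Pm
  rw [Matrix.det_fromBlocks_zero₂₁, Matrix.det_one, one_mul]

def conj (Q : Matrix μ μ F) (B : Matrix (Fin 1 ⊕ μ) (Fin 1 ⊕ μ) F) :
    Matrix (Fin 1 ⊕ μ) (Fin 1 ⊕ μ) F := Pm Q * B * (Pm Q)ᵀ

lemma conj_conj (Q Q' : Matrix μ μ F) (B : Matrix (Fin 1 ⊕ μ) (Fin 1 ⊕ μ) F) :
    conj Q' (conj Q B) = conj (Q' * Q) B := by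
  unfold conj
  rw [show Pm Q' * (Pm Q * B * (Pm Q)ᵀ) * (Pm Q')ᵀ
      = (Pm Q' * Pm Q) * B * ((Pm Q)ᵀ * (Pm Q')ᵀ) by
    simp only [Matrix.mul_assoc]]
  rw [Pm_mul, ← Matrix.transpose_mul, Pm_mul]

lemma conj_one (B : Matrix (Fin 1 ⊕ μ) (Fin 1 ⊕ μ) F) : conj 1 B = B := by
  unfold conj
  rw [Pm_one, Matrix.transpose_one, Matrix.one_mul, Matrix.mul_one]

lemma conj_symm {Q : Matrix μ μ F} {B : Matrix (Fin 1 ⊕ μ) (Fin 1 ⊕ μ) F} (hB : B.IsSymm) :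
    (conj Q B).IsSymm := by
  unfold Matrix.IsSymm at hB ⊢
  unfold conj
  rw [Matrix.transpose_mul, Matrix.transpose_mul, Matrix.transpose_transpose, hB,
    Matrix.mul_assoc]

lemma conj_det (Q : Matrix μ μ F) (B : Matrix (Fin 1 ⊕ μ) (Fin 1 ⊕ μ) F) :
    (conj Q B).det = Q.det * B.det * Q.det := by
  unfold conj
  rw [Matrix.det_mul, Matrix.det_mul, Matrix.det_transpose, Pm_det]

lemma conj_blocks (Q : Matrix μ μ F) (B : Matrix (Fin 1 ⊕ μ) (Fin 1 ⊕ μ) F) :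
    conj Q B = fromBlocks (B.toBlocks₁₁) (B.toBlocks₁₂ * Qᵀ)
      (Q * B.toBlocks₂₁) (Q * B.toBlocks₂₂ * Qᵀ) := by
  conv_lhs => rw [conj, Pm_transpose, ← Matrix.fromBlocks_toBlocks B]
  unfold Pm
  rw [Matrix.fromBlocks_multiply, Matrix.fromBlocks_multiply]
  simp [Matrix.mul_assoc]

lemma conj_corner (Q : Matrix μ μ F) (B : Matrix (Fin 1 ⊕ μ) (Fin 1 ⊕ μ) F) :
    conj Q B (Sum.inl 0) (Sum.inl 0) = B (Sum.inl 0) (Sum.inl 0) := by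
  rw [conj_blocks]
  rfl

lemma conj_col (Q : Matrix μ μ F) (B : Matrix (Fin 1 ⊕ μ) (Fin 1 ⊕ μ) F) (j : μ) :
    conj Q B (Sum.inr j) (Sum.inl 0)
      = Q.mulVec (fun i => B (Sum.inr i) (Sum.inl 0)) j := by
  rw [conj_blocks]
  show (Q * B.toBlocks₂₁) j 0 = _
  simp [Matrix.mul_apply, Matrix.mulVec, dotProduct, Matrix.toBlocks₂₁]

lemma card_piece_eq {v w : μ → F} (hv : v ≠ 0) (hw : w ≠ 0) :
    (Finset.univ.filter fun B : Matrix (Fin 1 ⊕ μ) (Fin 1 ⊕ μ) F =>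
        ((IsUnit B.det ∧ B.IsSymm) ∧ B (Sum.inl 0) (Sum.inl 0) = 0) ∧
          (fun j => B (Sum.inr j) (Sum.inl 0)) = v).card
      = (Finset.univ.filter fun B : Matrix (Fin 1 ⊕ μ) (Fin 1 ⊕ μ) F =>
        ((IsUnit B.det ∧ B.IsSymm) ∧ B (Sum.inl 0) (Sum.inl 0) = 0) ∧
          (fun j => B (Sum.inr j) (Sum.inl 0)) = w).card := by
  obtain ⟨Q, hQ, hQv⟩ := exists_mulVec_eq hv hw
  have hQl : Q⁻¹ * Q = 1 := Matrix.nonsing_inv_mul Q hQ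
  have hQr : Q * Q⁻¹ = 1 := Matrix.mul_nonsing_inv Q hQ
  have hQidet : IsUnit (Q⁻¹).det := Matrix.isUnit_nonsing_inv_det Q hQ
  have hQiw : Q⁻¹.mulVec w = v := by
    rw [← hQv, Matrix.mulVec_mulVec, hQl, Matrix.one_mulVec]
  have hmem : ∀ (R : Matrix μ μ F), IsUnit R.det → ∀ (u u' : μ → F), R.mulVec u = u' →
      ∀ B ∈ (Finset.univ.filter fun B : Matrix (Fin 1 ⊕ μ) (Fin 1 ⊕ μ) F =>
        ((IsUnit B.det ∧ B.IsSymm) ∧ B (Sum.inl 0) (Sum.inl 0) = 0) ∧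
          (fun j => B (Sum.inr j) (Sum.inl 0)) = u),
      conj R B ∈ (Finset.univ.filter fun B : Matrix (Fin 1 ⊕ μ) (Fin 1 ⊕ μ) F =>
        ((IsUnit B.det ∧ B.IsSymm) ∧ B (Sum.inl 0) (Sum.inl 0) = 0) ∧
          (fun j => B (Sum.inr j) (Sum.inl 0)) = u') := by
    intro R hR u u' hu B hB
    simp only [Finset.mem_filter, Finset.mem_univ, true_and] at hB ⊢
    obtain ⟨⟨⟨hdet, hsym⟩, hcorner⟩, hcol⟩ := hB
    refine ⟨⟨⟨?_, conj_symm hsym⟩, ?_⟩, ?_⟩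
    · rw [conj_det]
      exact (hR.mul hdet).mul hR
    · rw [conj_corner]
      exact hcorner
    · funext j
      rw [conj_col, hcol, hu]
  refine Finset.card_bij' (fun B _ => conj Q B) (fun B _ => conj Q⁻¹ B) ?_ ?_ ?_ ?_
  · exact hmem Q hQ v w hQv
  · exact hmem Q⁻¹ hQidet w v hQiw
  · intro B _
    show conj Q⁻¹ (conj Q B) = B
    rw [conj_conj, hQl, conj_one]
  · intro B _
    show conj Q (conj Q⁻¹ B) = B
    rw [conj_conj, hQr, conj_one]

lemma card_stratum0 {v₀ : μ → F} (hv₀ : v₀ ≠ 0) :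
    (Finset.univ.filter fun B : Matrix (Fin 1 ⊕ μ) (Fin 1 ⊕ μ) F =>
        (IsUnit B.det ∧ B.IsSymm) ∧ B (Sum.inl 0) (Sum.inl 0) = 0).card
      = (Fintype.card F ^ Fintype.card μ - 1) *
        (Finset.univ.filter fun B : Matrix (Fin 1 ⊕ μ) (Fin 1 ⊕ μ) F =>
          ((IsUnit B.det ∧ B.IsSymm) ∧ B (Sum.inl 0) (Sum.inl 0) = 0) ∧
            (fun j => B (Sum.inr j) (Sum.inl 0)) = v₀).card := by
  have hne : ∀ B ∈ (Finset.univ.filter fun B : Matrix (Fin 1 ⊕ μ) (Fin 1 ⊕ μ) F =>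
      (IsUnit B.det ∧ B.IsSymm) ∧ B (Sum.inl 0) (Sum.inl 0) = 0),
      (fun j => B (Sum.inr j) (Sum.inl 0)) ∈ (Finset.univ.filter fun v : μ → F => v ≠ 0) := by
    intro B hB
    simp only [Finset.mem_filter, Finset.mem_univ, true_and] at hB ⊢
    intro h0
    have hdet0 : B.det = 0 := by
      apply Matrix.det_eq_zero_of_column_eq_zero (Sum.inl 0)
      intro i
      rcases i with x | j
      · rw [Fin.eq_zero x]
        exact hB.2
      · exact congrFun h0 j
    rw [hdet0] at hB
    exact (not_isUnit_zero : ¬ IsUnit (0:F)) hB.1.1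
  rw [Finset.card_eq_sum_card_fiberwise hne]
  have hfib : ∀ v ∈ (Finset.univ.filter fun v : μ → F => v ≠ 0),
      ((Finset.univ.filter fun B : Matrix (Fin 1 ⊕ μ) (Fin 1 ⊕ μ) F =>
        (IsUnit B.det ∧ B.IsSymm) ∧ B (Sum.inl 0) (Sum.inl 0) = 0).filter
          fun B => (fun j => B (Sum.inr j) (Sum.inl 0)) = v).card
      = (Finset.univ.filter fun B : Matrix (Fin 1 ⊕ μ) (Fin 1 ⊕ μ) F =>
          ((IsUnit B.det ∧ B.IsSymm) ∧ B (Sum.inl 0) (Sum.inl 0) = 0) ∧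
            (fun j => B (Sum.inr j) (Sum.inl 0)) = v₀).card := by
    intro v hv
    simp only [Finset.mem_filter, Finset.mem_univ, true_and] at hv
    rw [Finset.filter_filter]
    exact card_piece_eq hv hv₀
  rw [Finset.sum_congr rfl hfib, Finset.sum_const, smul_eq_mul]
  congr 1
  rw [Finset.filter_ne' Finset.univ 0, Finset.card_erase_of_mem (Finset.mem_univ _),
    Finset.card_univ, Fintype.card_fun]

end conj

-- ===== transfer of corner piece =====
lemma card_piece_e {κ : Type*} [Fintype κ] [DecidableEq κ] :
    (Finset.univ.filter fun B : Matrix (Fin 1 ⊕ (Fin 1 ⊕ κ)) (Fin 1 ⊕ (Fin 1 ⊕ κ)) F =>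
        ((IsUnit B.det ∧ B.IsSymm) ∧ B (Sum.inl 0) (Sum.inl 0) = 0) ∧
          (fun j => B (Sum.inr j) (Sum.inl 0))
            = Sum.elim (fun _ => (1:F)) (fun _ => 0)).card
      = Fintype.card F * (Fintype.card F ^ Fintype.card κ * Ncard F κ) := by
  rw [← card_corner_piece]
  set e := Equiv.sumAssoc (Fin 1) (Fin 1) κ with he
  refine Finset.card_bij (fun B _ => B.submatrix e e) ?_ ?_ ?_
  · intro B hB
    simp only [Finset.mem_filter, Finset.mem_univ, true_and] at hB ⊢
    obtain ⟨⟨⟨hdet, hsym⟩, hcorner⟩, hcol⟩ := hB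
    refine ⟨⟨?_, (isSymm_submatrix_iff e B).mpr hsym⟩, ?_, ?_, ?_⟩
    · rw [Matrix.det_submatrix_equiv_self]
      exact hdet
    · simpa [Matrix.submatrix_apply, he] using hcorner
    · have := congrFun hcol (Sum.inl 0)
      simpa [Matrix.submatrix_apply, he] using this
    · intro j
      have := congrFun hcol (Sum.inr j)
      simpa [Matrix.submatrix_apply, he] using this
  · intro B₁ _ B₂ _ h
    have := congrArg (fun M => M.submatrix e.symm e.symm) h
    simpa [Matrix.submatrix_submatrix] using this
  · intro B hB
    simp only [Finset.mem_filter, Finset.mem_univ, true_and] at hB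
    obtain ⟨⟨hdet, hsym⟩, h00, h10, hcol⟩ := hB
    refine ⟨B.submatrix e.symm e.symm, ?_, by simp [Matrix.submatrix_submatrix]⟩
    simp only [Finset.mem_filter, Finset.mem_univ, true_and]
    refine ⟨⟨⟨?_, (isSymm_submatrix_iff e.symm B).mpr hsym⟩, ?_⟩, ?_⟩
    · rw [Matrix.det_submatrix_equiv_self]
      exact hdet
    · simpa [Matrix.submatrix_apply, he] using h00
    · funext j
      rcases j with x | j
      · rw [Fin.eq_zero x]
        simpa [Matrix.submatrix_apply, he] using h10
      · simpa [Matrix.submatrix_apply, he] using hcol j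

-- ===== the recurrence =====
lemma Ncard_rec {κ : Type*} [Fintype κ] [DecidableEq κ] :
    Ncard F (Fin 1 ⊕ (Fin 1 ⊕ κ)) =
      (Fintype.card F - 1) *
        (Fintype.card F ^ (1 + Fintype.card κ) * Ncard F (Fin 1 ⊕ κ))
      + (Fintype.card F ^ (1 + Fintype.card κ) - 1) *
        (Fintype.card F * (Fintype.card F ^ Fintype.card κ * Ncard F κ)) := by
  have hcards : Fintype.card (Fin 1 ⊕ κ) = 1 + Fintype.card κ := by
    simp [Fintype.card_sum]
  have hsplit : Ncard F (Fin 1 ⊕ (Fin 1 ⊕ κ)) =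
      (Finset.univ.filter fun B : Matrix (Fin 1 ⊕ (Fin 1 ⊕ κ)) (Fin 1 ⊕ (Fin 1 ⊕ κ)) F =>
        (IsUnit B.det ∧ B.IsSymm) ∧ B (Sum.inl 0) (Sum.inl 0) ≠ 0).card +
      (Finset.univ.filter fun B : Matrix (Fin 1 ⊕ (Fin 1 ⊕ κ)) (Fin 1 ⊕ (Fin 1 ⊕ κ)) F =>
        (IsUnit B.det ∧ B.IsSymm) ∧ B (Sum.inl 0) (Sum.inl 0) = 0).card := by
    unfold Ncard
    have h := Finset.card_filter_add_card_filter_not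
      (s := (Finset.univ.filter fun B : Matrix (Fin 1 ⊕ (Fin 1 ⊕ κ)) (Fin 1 ⊕ (Fin 1 ⊕ κ)) F =>
        IsUnit B.det ∧ B.IsSymm))
      (p := fun B => B (Sum.inl 0) (Sum.inl 0) = 0)
    rw [Finset.filter_filter, Finset.filter_filter] at h
    simp only [ne_eq]
    rw [Nat.add_comm] at h
    exact h.symm
  have hv₀ : (Sum.elim (fun _ => (1:F)) (fun _ => 0) : (Fin 1 ⊕ κ) → F) ≠ 0 := by
    intro h
    have := congrFun h (Sum.inl 0)
    simp at this
  rw [hsplit, card_stratum1, card_stratum0 hv₀, card_piece_e, hcards]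



-- ===== specialization to Fin n =====

lemma Ncard_fin_rec (n : ℕ) :
    Ncard F (Fin (n+2)) =
      (Fintype.card F - 1) * (Fintype.card F ^ (n+1) * Ncard F (Fin (n+1)))
      + (Fintype.card F ^ (n+1) - 1) *
        (Fintype.card F * (Fintype.card F ^ n * Ncard F (Fin n))) := by
  have e1 : Fin (n+2) ≃ Fin 1 ⊕ (Fin 1 ⊕ Fin n) :=
    (finCongr (by omega : n+2 = 1 + (1+n))).trans
      ((finSumFinEquiv (m := 1) (n := 1+n)).symm.trans
        (Equiv.sumCongr (Equiv.refl (Fin 1)) (finSumFinEquiv (m := 1) (n := n)).symm))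
  have e2 : Fin 1 ⊕ Fin n ≃ Fin (n+1) :=
    (finSumFinEquiv (m := 1) (n := n)).trans (finCongr (by omega))
  rw [Ncard_congr e1, Ncard_rec, Ncard_congr e2]
  simp only [Fintype.card_fin]
  rw [Nat.add_comm 1 n]

lemma Ncard_cast_rec (hq1 : 1 ≤ Fintype.card F) (n : ℕ) :
    ((Ncard F (Fin (n+2)) : ℂ)) =
      ((Fintype.card F : ℂ) - 1) *
        ((Fintype.card F : ℂ) ^ (n+1) * (Ncard F (Fin (n+1)) : ℂ))
      + ((Fintype.card F : ℂ) ^ (n+1) - 1) *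
        ((Fintype.card F : ℂ) * ((Fintype.card F : ℂ) ^ n * (Ncard F (Fin n) : ℂ))) := by
  have h1 : 1 ≤ Fintype.card F ^ (n+1) := Nat.one_le_pow _ _ (by omega)
  rw [Ncard_fin_rec n]
  push_cast [Nat.cast_sub hq1, Nat.cast_sub h1]
  ring

lemma Ncard_closed (hq1 : 1 ≤ Fintype.card F) (m : ℕ) :
    ((Ncard F (Fin (2*m)) : ℂ))
        = (Fintype.card F : ℂ) ^ (m*(m+1)) *
          ∏ j ∈ Finset.Icc 1 m, ((Fintype.card F : ℂ) ^ (2*j-1) - 1)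
    ∧ ((Ncard F (Fin (2*m+1)) : ℂ))
        = (Fintype.card F : ℂ) ^ (m*(m+1)) *
          ∏ j ∈ Finset.Icc 1 (m+1), ((Fintype.card F : ℂ) ^ (2*j-1) - 1) := by
  set qC : ℂ := (Fintype.card F : ℂ) with hqC
  induction m with
  | zero =>
    constructor
    · show ((Ncard F (Fin 0) : ℂ)) = _
      rw [Ncard_fin_zero]
      simp
    · show ((Ncard F (Fin 1) : ℂ)) = _
      rw [Ncard_fin_one]
      rw [Nat.cast_sub hq1]
      simp [hqC]
  | succ m ih =>
    obtain ⟨ih1, ih2⟩ := ih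
    have hprod : ∀ k : ℕ, ∏ j ∈ Finset.Icc 1 (k+1), (qC ^ (2*j-1) - 1)
        = (∏ j ∈ Finset.Icc 1 k, (qC ^ (2*j-1) - 1)) * (qC ^ (2*k+1) - 1) := by
      intro k
      rw [Finset.prod_Icc_succ_top (by omega)]
      have hee : 2*(k+1)-1 = 2*k+1 := by omega
      rw [hee]
    have h1 : ((Ncard F (Fin (2*(m+1))) : ℂ))
        = qC ^ ((m+1)*(m+2)) * ∏ j ∈ Finset.Icc 1 (m+1), (qC ^ (2*j-1) - 1) := by
      have hidx : 2*(m+1) = (2*m) + 2 := by ring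
      rw [hidx, Ncard_cast_rec hq1, ih1, ih2, hprod m]
      ring
    refine ⟨h1, ?_⟩
    have hidx : 2*(m+1)+1 = (2*m+1) + 2 := by ring
    rw [hidx, Ncard_cast_rec hq1]
    have hidx2 : 2*m+1+1 = 2*(m+1) := by ring
    rw [hidx2, h1, ih2, hprod (m+1), hprod m]
    ring


end Stmt7Aux

theorem stmt7 (s : ℕ) (hs : 0 < s) (ε : Fq s) (hε : ¬ IsSquare ε)
    (ψ : AddChar (Fq s) ℂ) (hψ : ψ ≠ 1) (r : ℕ) (hr : 1 ≤ r) :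
    bSum s ε r ψ =
      if Even r then
        ((3 : ℂ) ^ s) ^ (r * (r + 6) / 4) * ∏ j ∈ Finset.Icc 1 (r / 2), (((3 : ℂ) ^ s) ^ (2 * j - 1) - 1)
      else
        -((3 : ℂ) ^ s) ^ ((r ^ 2 + 4 * r - 1) / 4) *
          ∏ j ∈ Finset.Icc 1 ((r + 1) / 2), (((3 : ℂ) ^ s) ^ (2 * j - 1) - 1) := by
  classical
  have hcard : Fintype.card (Fq s) = 3^s := by
    rw [← Nat.card_eq_fintype_card]
    exact GaloisField.card 3 s (by omega)
  have hch : (3 : Fq s) = 0 := by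
    have := CharP.cast_eq_zero (Fq s) 3
    exact_mod_cast this
  have hodd : Fintype.card (Fq s) % 2 = 1 := by
    rw [hcard, Nat.pow_mod]
    norm_num
  have hq3 : 3 ≤ Fintype.card (Fq s) := by
    rw [hcard]
    calc 3 = 3^1 := (pow_one 3).symm
      _ ≤ 3^s := Nat.pow_le_pow_right (by norm_num) hs
  have hq1 : 1 ≤ Fintype.card (Fq s) := by omega
  have hqC : ((Fintype.card (Fq s) : ℂ)) = (3:ℂ)^s := by
    rw [hcard]
    push_cast
    ring
  have hinner : ∀ B ∈ (Finset.univ.filter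
      (fun B : Matrix (Fin r) (Fin r) (Fq s) => IsUnit B.det ∧ B.IsSymm)),
      (∑ h : Matrix (Fin r) (Fin 2) (Fq s), ψ ((deltaEps s ε * (hᵀ * B * h)).trace))
        = (-1)^r * ((Fintype.card (Fq s) : ℂ))^r := by
    intro B hB
    rw [Finset.mem_filter] at hB
    have hδ : deltaEps s ε = !![1, 0; 0, -ε] := rfl
    rw [hδ, Stmt7Aux.hsum_eq ψ ε B, Stmt7Aux.pair_sum_eq hψ hodd hq3 hch hε hB.2.1 hB.2.2]
  rw [bSum, Finset.sum_congr rfl hinner, Finset.sum_const, nsmul_eq_mul]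
  have hNc : (Finset.univ.filter
      (fun B : Matrix (Fin r) (Fin r) (Fq s) => IsUnit B.det ∧ B.IsSymm)).card
      = Stmt7Aux.Ncard (Fq s) (Fin r) := rfl
  rw [hNc]
  rcases Nat.even_or_odd r with he | ho
  · rw [if_pos he]
    obtain ⟨m, hm⟩ := he
    have hrm : r = 2*m := by omega
    rw [hrm]
    have hdiv1 : 2*m*(2*m+6)/4 = m*(m+3) := by
      have h4 : 2*m*(2*m+6) = 4*(m*(m+3)) := by ring
      rw [h4, Nat.mul_div_cancel_left _ (by norm_num)]
    have hdiv2 : 2*m/2 = m := by omega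
    rw [hdiv1, hdiv2, (Stmt7Aux.Ncard_closed hq1 m).1]
    have hneg : ((-1 : ℂ))^(2*m) = 1 := Even.neg_one_pow ⟨m, by ring⟩
    rw [hneg]
    simp only [← hqC]
    ring
  · obtain ⟨m, hm⟩ := ho
    have hne : ¬ Even r := by
      rw [Nat.even_iff, hm]
      omega
    rw [if_neg hne]
    rw [hm]
    have hdiv1 : ((2*m+1)^2 + 4*(2*m+1) - 1)/4 = m*(m+3)+1 := by
      have h4 : (2*m+1)^2 + 4*(2*m+1) = 4*(m*(m+3)+1) + 1 := by ring
      rw [h4, Nat.add_sub_cancel, Nat.mul_div_cancel_left _ (by norm_num)]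
    have hdiv2 : (2*m+1+1)/2 = m+1 := by omega
    rw [hdiv1, hdiv2, (Stmt7Aux.Ncard_closed hq1 m).2]
    have hneg : ((-1 : ℂ))^(2*m+1) = -1 := Odd.neg_one_pow ⟨m, by ring⟩
    rw [hneg]
    simp only [← hqC]
    ring
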